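/- Let p_i ≠ p_j be points in EuclideanSpace ℝ (Fin N) and ρ_i, ρ_j real numbers with 0 ≤ ρ_i, 0 ≤ ρ_j and ρ_i + ρ_j < ‖p_i - p_j‖ (nonoverlapping disks). Let H be the power bisector with weights w_i = ρ_i and w_j = ρ_j. Then Metric.infDist p_i H > ρ_i. -/

import Mathlib

open Metric Set
open scoped RealInnerProductSpace

/-- For nonoverlapping disks, the distance from the center `pᵢ` to the power bisector
(with weights equal to the radii) exceeds the radius `ρᵢ`. -/
theorem radius_lt_infDist_to_power_bisector {N : ℕ}
    (pi pj : EuclideanSpace ℝ (Fin N)) (ρi ρj : ℝ)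
    (hρi : 0 ≤ ρi) (hρj : 0 ≤ ρj) (hsep : ρi + ρj < ‖pi - pj‖) (hij : pi ≠ pj) :
    Metric.infDist pi
        {x : EuclideanSpace ℝ (Fin N) |
          2 * ⟪x, pi - pj⟫ = ρj ^ 2 - ρi ^ 2 + ‖pi‖ ^ 2 - ‖pj‖ ^ 2} > ρi := by
  set v : EuclideanSpace ℝ (Fin N) := pi - pj with hv
  have hvne : v ≠ 0 := sub_ne_zero.mpr hij
  have hvpos : 0 < ‖v‖ := norm_pos_iff.mpr hvne
  set S : Set (EuclideanSpace ℝ (Fin N)) :=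
    {x | 2 * ⟪x, v⟫ = ρj ^ 2 - ρi ^ 2 + ‖pi‖ ^ 2 - ‖pj‖ ^ 2} with hS
  set c : ℝ := (ρj ^ 2 - ρi ^ 2 + ‖pi‖ ^ 2 - ‖pj‖ ^ 2) / 2 with hc
  have hne : S.Nonempty := by
    refine ⟨(c / ‖v‖ ^ 2) • v, ?_⟩
    have : ⟪(c / ‖v‖ ^ 2) • v, v⟫ = c := by
      rw [real_inner_smul_left, real_inner_self_eq_norm_sq]
      field_simp
    rw [hS, Set.mem_setOf_eq, this, hc]
    ring
  set d : ℝ := (‖v‖ ^ 2 + ρi ^ 2 - ρj ^ 2) / (2 * ‖v‖) with hd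
  have hkey : ∀ x ∈ S, ⟪pi - x, v⟫ = (‖v‖ ^ 2 + ρi ^ 2 - ρj ^ 2) / 2 := by
    intro x hx
    have hx' : 2 * ⟪x, v⟫ = ρj ^ 2 - ρi ^ 2 + ‖pi‖ ^ 2 - ‖pj‖ ^ 2 := hx
    have hnv : ‖v‖ ^ 2 = ‖pi‖ ^ 2 - 2 * ⟪pi, pj⟫ + ‖pj‖ ^ 2 := by
      rw [hv]; exact norm_sub_sq_real pi pj
    have hpiv : ⟪pi, v⟫ = ‖pi‖ ^ 2 - ⟪pi, pj⟫ := by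
      rw [hv, inner_sub_right, real_inner_self_eq_norm_sq]
    rw [inner_sub_left]
    nlinarith [hx', hnv, hpiv]
  have hlow : ∀ x ∈ S, d ≤ dist pi x := by
    intro x hx
    have h1 : ⟪pi - x, v⟫ ≤ ‖pi - x‖ * ‖v‖ := real_inner_le_norm _ _
    have h2 := hkey x hx
    rw [dist_eq_norm, hd]
    rw [div_le_iff₀ (by positivity)]
    nlinarith [h1, h2]
  have hd0 : 0 ≤ d := le_trans hρi (by
    rw [hd, le_div_iff₀ (by positivity)]
    nlinarith [hsep, hρj, hρi, hvpos])
  have hinf : d ≤ Metric.infDist pi S := by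
    have h1 : ENNReal.ofReal d ≤ Metric.infEDist pi S := by
      rw [Metric.le_infEDist]
      intro y hy
      calc ENNReal.ofReal d ≤ ENNReal.ofReal (dist pi y) :=
            ENNReal.ofReal_le_ofReal (hlow y hy)
        _ = edist pi y := (edist_dist pi y).symm
    have hfin : Metric.infEDist pi S ≠ ⊤ := (Metric.infEdist_ne_top hne)
    have := ENNReal.toReal_mono hfin h1
    rwa [ENNReal.toReal_ofReal hd0] at this
  have hρd : ρi < d := by
    rw [hd, lt_div_iff₀ (by positivity)]
    nlinarith [hsep, hρj, hρi, hvpos]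
  exact lt_of_lt_of_le hρd hinf
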